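/- Let n > 3 be odd and let m be an integer with 1 < m < n, gcd(m, n) = 1 and gcd(m − 1, n) = 1. Then L_n(m) is right alternative — equivalently, m·y − (m−1)·(m·y − (m−1)·x) ≡ x (mod n) for all distinct residues x, y modulo n — if and only if m = 2. Moreover m = 2 satisfies gcd(2, n) = 1 and gcd(1, n) = 1 (n being odd), so the class L_n contains exactly one right alternative loop, namely L_n(2). -/
import Mathlib


/-- `Lₙ` contains exactly one right alternative loop, namely `Lₙ(2)`. -/
theorem stmt_4 (n : ℕ) (hn : 3 < n) (hodd : Odd n) :
    (1 < 2 ∧ 2 < n ∧ Nat.gcd 2 n = 1 ∧ Nat.gcd 1 n = 1) ∧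
    ∀ m : ℕ, 1 < m → m < n → Nat.gcd m n = 1 → Nat.gcd (m - 1) n = 1 →
      ((∀ x y : ZMod n, x ≠ y →
          (m : ZMod n) * y
              - ((m : ZMod n) - 1) * ((m : ZMod n) * y - ((m : ZMod n) - 1) * x)
            = x)
        ↔ m = 2) := by
  have hn0 : 0 < n := by omega
  constructor
  · refine ⟨by norm_num, by omega, ?_, Nat.gcd_one_left n⟩
    exact Nat.coprime_two_left.2 hodd
  · intro m hm1 hmn hg hg1
    constructor
    · intro h
      have h10 : (1 : ZMod n) ≠ 0 := by
        haveI : NeZero n := ⟨by omega⟩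
        intro hc
        have h1 : ((1 : ℕ) : ZMod n) = 0 := by simpa using hc
        rw [ZMod.natCast_eq_zero_iff] at h1
        exact absurd (Nat.le_of_dvd one_pos h1) (by omega)
      have key := h 1 0 (by simpa using h10)
      have key2 : ((m : ZMod n) - 1) * ((m : ZMod n) - 1) = 1 := by
        have : (m : ZMod n) * 0 - ((m : ZMod n) - 1) * ((m : ZMod n) * 0 - ((m : ZMod n) - 1) * 1) = ((m : ZMod n) - 1) * ((m : ZMod n) - 1) := by ring
        rw [this] at key; exact key
      -- so m*(m-2) = 0
      have hmu : IsUnit (m : ZMod n) := (ZMod.isUnit_iff_coprime m n).2 hg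
      have hz : (m : ZMod n) * ((m : ZMod n) - 2) = 0 := by
        have : (m : ZMod n) * ((m : ZMod n) - 2) = ((m : ZMod n) - 1) * ((m : ZMod n) - 1) - 1 := by ring
        rw [this, key2]; ring
      have h2 : (m : ZMod n) = 2 := by
        have := (hmu.mul_right_eq_zero).1 hz
        linear_combination this
      have : ((m : ℕ) : ZMod n) = ((2 : ℕ) : ZMod n) := by exact_mod_cast h2
      have := (ZMod.natCast_eq_natCast_iff' m 2 n).1 this
      rw [Nat.mod_eq_of_lt hmn, Nat.mod_eq_of_lt (by omega)] at this
      exact this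
    · intro h
      subst h
      intro x y _
      push_cast
      ring
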